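/- Let L be a 2^n × 2^n complex matrix that commutes with every generator H ∈ {Z_j : 1 ≤ j ≤ n} ∪ {X_j X_{j+1} : 1 ≤ j ≤ n−1}. Then L lies in the complex linear span of the identity I^{⊗n} and the parity operator P = Z^{⊗n}; in particular, this commutant has complex dimension 2. -/

import Mathlib

open Matrix Complex
open scoped Kronecker

noncomputable section

abbrev QIdx (n : ℕ) := Fin n → Fin 2
abbrev NMat (n : ℕ) := Matrix (QIdx n) (QIdx n) ℂ
abbrev NMat2 (n : ℕ) := Matrix (QIdx n × QIdx n) (QIdx n × QIdx n) ℂ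

/-- The 2×2 Pauli X matrix. -/
def σX : Matrix (Fin 2) (Fin 2) ℂ := !![0, 1; 1, 0]
/-- The 2×2 Pauli Y matrix. -/
def σY : Matrix (Fin 2) (Fin 2) ℂ := !![0, -Complex.I; Complex.I, 0]
/-- The 2×2 Pauli Z matrix. -/
def σZ : Matrix (Fin 2) (Fin 2) ℂ := !![1, 0; 0, -1]

/-- Tensor (Kronecker) product of `n` one-qubit matrices, realized on index type `Fin n → Fin 2`. -/
def tensor {n : ℕ} (M : Fin n → Matrix (Fin 2) (Fin 2) ℂ) : NMat n :=
  Matrix.of fun f g => ∏ i, M i (f i) (g i)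

/-- The Jordan–Wigner Majorana operator `c_μ` (0-based index: `c_{2i} = Z^{⊗i} X I…`,
`c_{2i+1} = Z^{⊗i} Y I…`). -/
def majorana (n : ℕ) (μ : Fin (2 * n)) : NMat n :=
  tensor fun j =>
    if (j : ℕ) < (μ : ℕ) / 2 then σZ
    else if (j : ℕ) = (μ : ℕ) / 2 then (if (μ : ℕ) % 2 = 0 then σX else σY)
    else 1

/-- Ordered product `c^s` of the Majorana operators indexed by a subset `s`. -/
def cProd (n : ℕ) (s : Finset (Fin (2 * n))) : NMat n :=
  ((s.sort (· ≤ ·)).map (majorana n)).prod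

/-- The module `B_κ`: the complex span of products of `κ` distinct Majoranas. -/
def Bspace (n κ : ℕ) : Submodule ℂ (NMat n) :=
  Submodule.span ℂ {M | ∃ s : Finset (Fin (2 * n)), s.card = κ ∧ M = cProd n s}

/-- The Pauli string with `Z` on qubit `j` and identity elsewhere. -/
def pauliZ (n : ℕ) (j : Fin n) : NMat n := tensor fun k => if k = j then σZ else 1

/-- The Pauli string with `X` on qubits `j` and `j+1` and identity elsewhere. -/
def pauliXX (n : ℕ) (j : Fin n) : NMat n :=
  tensor fun k => if (k : ℕ) = (j : ℕ) ∨ (k : ℕ) = (j : ℕ) + 1 then σX else 1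

/-- The parity operator `P = Z^{⊗n}`. -/
def parity (n : ℕ) : NMat n := tensor fun _ => σZ


/-- The matchgate circuit generators `{Z_j} ∪ {X_j X_{j+1}}`. -/
def matchgateGens (n : ℕ) : Set (NMat n) :=
  {M | ∃ j : Fin n, M = pauliZ n j} ∪
  {M | ∃ j : Fin n, (j : ℕ) + 1 < n ∧ M = pauliXX n j}

/-- The space of linear symmetries: matrices commuting with every matchgate generator. -/
def linCommutant (n : ℕ) : Submodule ℂ (NMat n) where
  carrier := {L | ∀ H ∈ matchgateGens n, H * L = L * H}
  add_mem' := by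
    intro a b ha hb H hH
    simp [Matrix.mul_add, Matrix.add_mul, ha H hH, hb H hH]
  zero_mem' := by
    intro H hH
    simp
  smul_mem' := by
    intro c a ha H hH
    simp [Matrix.mul_smul, Matrix.smul_mul, ha H hH]


namespace MGAux
variable {n : ℕ}

def zsign (a : Fin 2) : ℂ := if a = 0 then 1 else -1
def ind (a : Fin 2) : ZMod 2 := if a = 0 then 0 else 1
def zs (a : ZMod 2) : ℂ := if a = 0 then 1 else -1
def par {n : ℕ} (f : QIdx n) : ZMod 2 := ∑ k, ind (f k)
def psign {n : ℕ} (f : QIdx n) : ℂ := ∏ k, zsign (f k)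
def flipS {n : ℕ} (s : Finset (Fin n)) (f : QIdx n) : QIdx n :=
  fun k => if k ∈ s then f k + 1 else f k

lemma fin2_add_one_ne : ∀ a : Fin 2, a + 1 ≠ a := by decide
lemma fin2_aa : ∀ a : Fin 2, a + 1 + 1 = a := by decide
lemma fin2_ne_iff : ∀ a b : Fin 2, a ≠ b ↔ b = a + 1 := by decide

lemma zsign_ne_zero (a : Fin 2) : zsign a ≠ 0 := by
  fin_cases a <;> simp [zsign]
lemma zsign_add_one (a : Fin 2) : zsign (a + 1) = - zsign a := by
  fin_cases a <;> simp [zsign]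
lemma zsign_eq_zs (a : Fin 2) : zsign a = zs (ind a) := by
  fin_cases a <;> simp [zsign, zs, ind]
lemma zs_add (x y : ZMod 2) : zs (x + y) = zs x * zs y := by
  rcases (by revert x; decide : ∀ x : ZMod 2, x = 0 ∨ x = 1) x with rfl | rfl <;>
    rcases (by revert y; decide : ∀ y : ZMod 2, y = 0 ∨ y = 1) y with rfl | rfl <;>
    simp [zs, show ((1:ZMod 2)+1) = 0 from rfl, show (1:ZMod 2) ≠ 0 from by decide]
lemma zsign_ne (a b : Fin 2) (h : a ≠ b) : zsign a = - zsign b := by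
  fin_cases a <;> fin_cases b <;> simp_all [zsign]

lemma σZ_apply (a b : Fin 2) : σZ a b = if a = b then zsign a else 0 := by
  fin_cases a <;> fin_cases b <;> simp [σZ, zsign]
lemma σX_apply (a b : Fin 2) : σX a b = if a = b then 0 else 1 := by
  fin_cases a <;> fin_cases b <;> simp [σX]

lemma pauliZ_apply (j : Fin n) (f g : QIdx n) :
    pauliZ n j f g = if f = g then zsign (f j) else 0 := by
  unfold pauliZ tensor
  rw [Matrix.of_apply]
  by_cases h : f = g
  · subst h
    simp only [if_pos rfl]
    have : ∀ i : Fin n, (if i = j then σZ else 1) (f i) (f i)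
        = if i = j then zsign (f i) else 1 := by
      intro i
      by_cases hi : i = j <;> simp [hi, σZ_apply, Matrix.one_apply]
    rw [Finset.prod_congr rfl fun i _ => this i]
    simp
  · rw [if_neg h]
    obtain ⟨i, hi⟩ : ∃ i, f i ≠ g i := by
      by_contra hc; push_neg at hc; exact h (funext hc)
    refine Finset.prod_eq_zero (Finset.mem_univ i) ?_
    by_cases hij : i = j
    · subst hij; simp [σZ_apply, hi]
    · simp [hij, Matrix.one_apply_ne hi]

lemma parity_apply (f g : QIdx n) :
    parity n f g = if f = g then psign f else 0 := by
  unfold parity tensor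
  rw [Matrix.of_apply]
  by_cases h : f = g
  · subst h
    simp only [if_pos rfl, psign]
    exact Finset.prod_congr rfl fun i _ => by simp [σZ_apply]
  · rw [if_neg h]
    obtain ⟨i, hi⟩ : ∃ i, f i ≠ g i := by
      by_contra hc; push_neg at hc; exact h (funext hc)
    exact Finset.prod_eq_zero (Finset.mem_univ i) (by simp [σZ_apply, hi])

end MGAux
namespace MGAux
variable {n : ℕ}

/-- The pair `{j, j+1}` as a finset of `Fin n`. -/
def pairSet (j : Fin n) (hj : (j : ℕ) + 1 < n) : Finset (Fin n) :=
  {j, ⟨(j : ℕ) + 1, hj⟩}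

lemma mem_pairSet (j : Fin n) (hj : (j : ℕ) + 1 < n) (k : Fin n) :
    k ∈ pairSet j hj ↔ ((k : ℕ) = (j : ℕ) ∨ (k : ℕ) = (j : ℕ) + 1) := by
  simp [pairSet, Fin.ext_iff]

lemma flipS_flipS (s : Finset (Fin n)) (f : QIdx n) : flipS s (flipS s f) = f := by
  funext k
  by_cases h : k ∈ s <;> simp [flipS, h, fin2_aa]

lemma flipS_apply_mem {s : Finset (Fin n)} {f : QIdx n} {k : Fin n} (h : k ∈ s) :
    flipS s f k = f k + 1 := by simp [flipS, h]

lemma flipS_apply_not_mem {s : Finset (Fin n)} {f : QIdx n} {k : Fin n} (h : k ∉ s) :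
    flipS s f k = f k := by simp [flipS, h]

lemma pauliXX_apply (j : Fin n) (hj : (j : ℕ) + 1 < n) (f g : QIdx n) :
    pauliXX n j f g = if g = flipS (pairSet j hj) f then 1 else 0 := by
  unfold pauliXX tensor
  rw [Matrix.of_apply]
  by_cases h : g = flipS (pairSet j hj) f
  · subst h
    rw [if_pos rfl]
    refine Finset.prod_eq_one fun k _ => ?_
    by_cases hk : (k : ℕ) = (j : ℕ) ∨ (k : ℕ) = (j : ℕ) + 1
    · have hm : k ∈ pairSet j hj := (mem_pairSet j hj k).2 hk
      beta_reduce
      rw [if_pos hk, σX_apply, flipS_apply_mem hm,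
        if_neg (fun he => fin2_add_one_ne (f k) he.symm)]
    · have hm : k ∉ pairSet j hj := fun hm => hk ((mem_pairSet j hj k).1 hm)
      beta_reduce
      rw [if_neg hk, flipS_apply_not_mem hm, Matrix.one_apply_eq]
  · rw [if_neg h]
    obtain ⟨k, hk⟩ : ∃ k, g k ≠ flipS (pairSet j hj) f k := by
      by_contra hc; push_neg at hc; exact h (funext hc)
    refine Finset.prod_eq_zero (Finset.mem_univ k) ?_
    by_cases hc : (k : ℕ) = (j : ℕ) ∨ (k : ℕ) = (j : ℕ) + 1
    · have hm : k ∈ pairSet j hj := (mem_pairSet j hj k).2 hc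
      rw [flipS_apply_mem hm] at hk
      have : f k = g k := by
        have := (fin2_ne_iff (f k) (g k))
        by_contra hne
        exact hk (this.1 hne)
      beta_reduce
      rw [if_pos hc, σX_apply, if_pos this]
    · have hm : k ∉ pairSet j hj := fun hm => hc ((mem_pairSet j hj k).1 hm)
      rw [flipS_apply_not_mem hm] at hk
      beta_reduce
      rw [if_neg hc]
      exact Matrix.one_apply_ne fun he => hk he.symm

lemma par_flipS (s : Finset (Fin n)) (f : QIdx n) :
    par (flipS s f) = par f + s.card := by
  unfold par
  have h1 : ∀ k : Fin n, ind (flipS s f k) = ind (f k) + (if k ∈ s then 1 else 0) := by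
    intro k
    by_cases h : k ∈ s
    · rw [flipS_apply_mem h, if_pos h]
      have : ∀ a : Fin 2, ind (a + 1) = ind a + 1 := by decide
      exact this (f k)
    · rw [flipS_apply_not_mem h, if_neg h, add_zero]
  rw [Finset.sum_congr rfl fun k _ => h1 k, Finset.sum_add_distrib]
  congr 1
  rw [Finset.sum_ite_mem, Finset.univ_inter, Finset.sum_const, nsmul_eq_mul, mul_one]

lemma psign_eq_zs_par (f : QIdx n) : psign f = zs (par f) := by
  unfold psign par
  have : ∀ (s : Finset (Fin n)), ∏ k ∈ s, zsign (f k) = zs (∑ k ∈ s, ind (f k)) := by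
    intro s
    induction s using Finset.induction with
    | empty => simp [zs]
    | @insert a s' hx ih =>
        rw [Finset.prod_insert hx, Finset.sum_insert hx, zs_add, ih,
                        zsign_eq_zs]
  exact this Finset.univ

end MGAux
namespace MGAux
variable {n : ℕ}

lemma flipS_apply (s : Finset (Fin n)) (f : QIdx n) (k : Fin n) :
    flipS s f k = if k ∈ s then f k + 1 else f k := rfl

lemma offdiag_zero (L : NMat n)
    (hZ : ∀ j : Fin n, pauliZ n j * L = L * pauliZ n j)
    {f g : QIdx n} (h : f ≠ g) : L f g = 0 := by
  obtain ⟨j, hjfg⟩ : ∃ j, f j ≠ g j := by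
    by_contra hcon; push_neg at hcon; exact h (funext hcon)
  have h1 : (pauliZ n j * L) f g = zsign (f j) * L f g := by
    rw [Matrix.mul_apply]
    rw [Fintype.sum_eq_single f (fun b hb => by
      rw [pauliZ_apply, if_neg (fun he => hb he.symm), zero_mul])]
    rw [pauliZ_apply, if_pos rfl]
  have h2 : (L * pauliZ n j) f g = L f g * zsign (g j) := by
    rw [Matrix.mul_apply]
    rw [Fintype.sum_eq_single g (fun b hb => by
      rw [pauliZ_apply, if_neg hb, mul_zero])]
    rw [pauliZ_apply, if_pos rfl]
  have heq : zsign (f j) * L f g = L f g * zsign (g j) := by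
    rw [← h1, ← h2, hZ j]
  rw [zsign_ne (f j) (g j) hjfg] at heq
  have h3 : L f g * zsign (g j) * 2 = 0 := by linear_combination -heq
  rcases mul_eq_zero.1 h3 with h4 | h4
  · rcases mul_eq_zero.1 h4 with h5 | h5
    · exact h5
    · exact absurd h5 (zsign_ne_zero _)
  · norm_num at h4

lemma diag_flip (L : NMat n)
    (hX : ∀ j : Fin n, ∀ hj : (j : ℕ) + 1 < n, pauliXX n j * L = L * pauliXX n j)
    (j : Fin n) (hj : (j : ℕ) + 1 < n) (f : QIdx n) :
    L (flipS (pairSet j hj) f) (flipS (pairSet j hj) f) = L f f := by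
  have h1 : ∀ g, (pauliXX n j * L) f g = L (flipS (pairSet j hj) f) g := by
    intro g
    rw [Matrix.mul_apply]
    rw [Fintype.sum_eq_single (flipS (pairSet j hj) f) (fun b hb => by
      rw [pauliXX_apply j hj, if_neg hb, zero_mul])]
    rw [pauliXX_apply j hj, if_pos rfl, one_mul]
  have h2 : ∀ g, (L * pauliXX n j) f g = L f (flipS (pairSet j hj) g) := by
    intro g
    rw [Matrix.mul_apply]
    rw [Fintype.sum_eq_single (flipS (pairSet j hj) g) (fun b hb => by
      rw [pauliXX_apply j hj]
      rw [if_neg (fun he : g = flipS (pairSet j hj) b => hb (by rw [he, flipS_flipS]))]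
      rw [mul_zero])]
    rw [pauliXX_apply j hj, flipS_flipS, if_pos rfl, mul_one]
  have key := congrFun (congrFun (hX j hj) f) (flipS (pairSet j hj) f)
  rw [h1, h2, flipS_flipS] at key
  exact key

/-- flipping any pair of positions at distance `k+1` preserves diagonal entries. -/
lemma diag_flip_pair (L : NMat n)
    (hX : ∀ j : Fin n, ∀ hj : (j : ℕ) + 1 < n, pauliXX n j * L = L * pauliXX n j) :
    ∀ (k : ℕ) (i i' : Fin n), (i' : ℕ) = (i : ℕ) + k + 1 →
      ∀ f, L (flipS {i, i'} f) (flipS {i, i'} f) = L f f := by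
  intro k
  induction k with
  | zero =>
    intro i i' hii f
    have hj : (i : ℕ) + 1 < n := hii ▸ i'.isLt
    have he : i' = (⟨(i : ℕ) + 1, hj⟩ : Fin n) := Fin.ext (by simpa using hii)
    rw [he]
    exact diag_flip L hX i hj f
  | succ k ih =>
    intro i i' hii f
    have hm : (i : ℕ) + 1 < n := by have := i'.isLt; omega
    set m : Fin n := ⟨(i : ℕ) + 1, hm⟩ with hmdef
    have hmv : (m : ℕ) = (i : ℕ) + 1 := rfl
    have hdecomp : flipS {i, i'} f = flipS {i, m} (flipS {m, i'} f) := by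
      funext x
      simp only [flipS_apply, Finset.mem_insert, Finset.mem_singleton, Fin.ext_iff]
      split_ifs <;> first | rfl | omega | exact (fin2_aa _).symm | exact fin2_aa _
    rw [hdecomp]
    have step1 : L (flipS {i, m} (flipS {m, i'} f)) (flipS {i, m} (flipS {m, i'} f))
        = L (flipS {m, i'} f) (flipS {m, i'} f) := by
      have he : ({i, m} : Finset (Fin n)) = pairSet i hm := rfl
      rw [he]
      exact diag_flip L hX i hm _
    rw [step1]
    exact ih m i' (by omega) f

lemma diag_flip_pair' (L : NMat n)
    (hX : ∀ j : Fin n, ∀ hj : (j : ℕ) + 1 < n, pauliXX n j * L = L * pauliXX n j)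
    (i i' : Fin n) (h : i ≠ i') (f : QIdx n) :
    L (flipS {i, i'} f) (flipS {i, i'} f) = L f f := by
  rcases lt_trichotomy (i : ℕ) (i' : ℕ) with hlt | heq | hgt
  · exact diag_flip_pair L hX ((i' : ℕ) - (i : ℕ) - 1) i i' (by omega) f
  · exact absurd (Fin.ext heq) h
  · rw [Finset.pair_comm]
    exact diag_flip_pair L hX ((i : ℕ) - (i' : ℕ) - 1) i' i (by omega) f

lemma diag_flip_even (L : NMat n)
    (hX : ∀ j : Fin n, ∀ hj : (j : ℕ) + 1 < n, pauliXX n j * L = L * pauliXX n j) :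
    ∀ (s : Finset (Fin n)), Even s.card → ∀ f, L (flipS s f) (flipS s f) = L f f := by
  intro s
  induction s using Finset.strongInduction with
  | _ s ih =>
    intro hev f
    rcases Finset.eq_empty_or_nonempty s with rfl | ⟨i, hi⟩
    · have he : flipS (∅ : Finset (Fin n)) f = f := funext fun k => by simp [flipS]
      rw [he]
    · have h2 : (s.erase i).Nonempty := by
        rw [← Finset.card_pos, Finset.card_erase_of_mem hi]
        rcases hev with ⟨c, hc⟩
        have hc0 : c ≠ 0 := by
          rintro rfl
          rw [add_zero] at hc
          rw [Finset.card_eq_zero] at hc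
          rw [hc] at hi
          exact absurd hi (Finset.notMem_empty i)
        omega
      obtain ⟨i', hi'⟩ := h2
      have hii' : i ≠ i' := fun he => (Finset.ne_of_mem_erase hi') he.symm
      have hi's : i' ∈ s := Finset.mem_of_mem_erase hi'
      have hdecomp : flipS s f = flipS ((s.erase i).erase i') (flipS {i, i'} f) := by
        funext x
        by_cases h1 : x = i
        · subst h1
          rw [flipS_apply, if_pos hi, flipS_apply,
            if_neg (by simp [Finset.mem_erase]), flipS_apply, if_pos (by simp)]
        · by_cases h2 : x = i'
          · subst h2
            rw [flipS_apply, if_pos hi's, flipS_apply,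
              if_neg (by simp [Finset.mem_erase]), flipS_apply, if_pos (by simp)]
          · by_cases h3 : x ∈ s
            · rw [flipS_apply, if_pos h3, flipS_apply,
                if_pos (by simp [Finset.mem_erase, h1, h2, h3]), flipS_apply,
                if_neg (by simp [h1, h2])]
            · rw [flipS_apply, if_neg h3, flipS_apply,
                if_neg (by simp [Finset.mem_erase, h3]), flipS_apply,
                if_neg (by simp [h1, h2])]
      rw [hdecomp]
      have hsub : (s.erase i).erase i' ⊂ s := by
        have hle : (s.erase i).erase i' ⊆ s.erase i := Finset.erase_subset _ _
        exact lt_of_le_of_lt hle (Finset.erase_ssubset hi)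
      have hcard : ((s.erase i).erase i').card = s.card - 2 := by
        rw [Finset.card_erase_of_mem hi', Finset.card_erase_of_mem hi]
        omega
      have hev' : Even ((s.erase i).erase i').card := by
        rw [hcard]
        rcases hev with ⟨c, hc⟩
        have : 2 ≤ s.card := by
          have := Finset.card_le_card (by
            intro x hx
            simp only [Finset.mem_insert, Finset.mem_singleton] at hx
            rcases hx with rfl | rfl
            exacts [hi, hi's] : ({i, i'} : Finset (Fin n)) ⊆ s)
          simpa [Finset.card_pair hii'] using this
        exact ⟨c - 1, by omega⟩
      rw [ih _ hsub hev' (flipS {i, i'} f)]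
      exact diag_flip_pair' L hX i i' hii' f

end MGAux
namespace MGAux
variable {n : ℕ}

def Dset (f g : QIdx n) : Finset (Fin n) := Finset.univ.filter fun k => f k ≠ g k

lemma flipS_Dset (f g : QIdx n) : g = flipS (Dset f g) f := by
  funext k
  by_cases h : f k = g k
  · rw [flipS_apply, if_neg (by simp [Dset, h]), h]
  · rw [flipS_apply, if_pos (by simp [Dset, h]), ← (fin2_ne_iff _ _).1 h]

lemma even_of_cast_zero {m : ℕ} (h : (m : ZMod 2) = 0) : Even m := by
  rw [ZMod.natCast_eq_zero_iff] at h
  obtain ⟨c, hc⟩ := h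
  exact ⟨c, by omega⟩

lemma reach (L : NMat n)
    (hX : ∀ j : Fin n, ∀ hj : (j : ℕ) + 1 < n, pauliXX n j * L = L * pauliXX n j)
    (f g : QIdx n) (hpar : par f = par g) : L g g = L f f := by
  have hg := flipS_Dset f g
  have hcard : ((Dset f g).card : ZMod 2) = 0 := by
    have h1 := par_flipS (Dset f g) f
    rw [← hg, ← hpar] at h1
    exact (left_eq_add.1 h1)
  rw [hg]
  exact diag_flip_even L hX (Dset f g) (even_of_cast_zero hcard) f

def fZero (n : ℕ) : QIdx n := fun _ => 0
def fOne (n : ℕ) (hn : 1 ≤ n) : QIdx n := fun k => if k = (⟨0, hn⟩ : Fin n) then 1 else 0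

lemma par_fZero : par (fZero n) = 0 := by
  unfold par fZero
  simp [ind]

lemma par_fOne (hn : 1 ≤ n) : par (fOne n hn) = 1 := by
  unfold par fOne
  have h1 : ∀ k : Fin n, ind (if k = (⟨0, hn⟩ : Fin n) then 1 else 0)
      = if k = (⟨0, hn⟩ : Fin n) then 1 else 0 := by
    intro k; by_cases h : k = (⟨0, hn⟩ : Fin n) <;> simp [h, ind]
  rw [Finset.sum_congr rfl fun k _ => h1 k, Finset.sum_ite_eq' Finset.univ]
  simp

lemma zmod2_cases (x : ZMod 2) : x = 0 ∨ x = 1 := by revert x; decide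

/-- The main structure theorem for the diagonal. -/
lemma diag_structure (L : NMat n) (hn : 1 ≤ n)
    (hX : ∀ j : Fin n, ∀ hj : (j : ℕ) + 1 < n, pauliXX n j * L = L * pauliXX n j)
    (f : QIdx n) :
    L f f = if par f = 0 then L (fZero n) (fZero n) else L (fOne n hn) (fOne n hn) := by
  by_cases h : par f = 0
  · rw [if_pos h]
    exact reach L hX (fZero n) f (by rw [par_fZero, h])
  · rw [if_neg h]
    rcases zmod2_cases (par f) with h0 | h1
    · exact absurd h0 h
    · exact reach L hX (fOne n hn) f (by rw [par_fOne, h1])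

lemma span_reach (L : NMat n) (hn : 1 ≤ n)
    (hcomm : ∀ H ∈ matchgateGens n, H * L = L * H) :
    L ∈ Submodule.span ℂ {(1 : NMat n), parity n} := by
  have hZ : ∀ j : Fin n, pauliZ n j * L = L * pauliZ n j := fun j =>
    hcomm _ (Or.inl ⟨j, rfl⟩)
  have hX : ∀ j : Fin n, ∀ hj : (j : ℕ) + 1 < n, pauliXX n j * L = L * pauliXX n j :=
    fun j hj => hcomm _ (Or.inr ⟨j, hj, rfl⟩)
  set a := L (fZero n) (fZero n) with ha
  set b := L (fOne n hn) (fOne n hn) with hb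
  have hL : L = ((a + b) / 2) • (1 : NMat n) + ((a - b) / 2) • parity n := by
    ext f g
    rw [Matrix.add_apply, Matrix.smul_apply, Matrix.smul_apply, Matrix.one_apply,
      parity_apply, smul_eq_mul, smul_eq_mul]
    by_cases h : f = g
    · subst h
      rw [if_pos rfl, if_pos rfl, psign_eq_zs_par, diag_structure L hn hX f]
      rcases zmod2_cases (par f) with h0 | h1
      · rw [h0, if_pos rfl, show zs 0 = 1 from rfl]
        ring
      · rw [h1, if_neg (by decide : ¬(1 : ZMod 2) = 0), show zs 1 = -1 from rfl]
        ring
    · rw [if_neg h, if_neg h, offdiag_zero L hZ h]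
      ring
  rw [hL]
  exact Submodule.add_mem _
    (Submodule.smul_mem _ _ (Submodule.subset_span (Set.mem_insert _ _)))
    (Submodule.smul_mem _ _ (Submodule.subset_span (Set.mem_insert_iff.2 (Or.inr rfl))))

end MGAux
namespace MGAux
variable {n : ℕ}

lemma pauliZ_diag (j : Fin n) : pauliZ n j = Matrix.diagonal fun f => zsign (f j) := by
  ext f g
  rw [pauliZ_apply, Matrix.diagonal_apply]

lemma parity_diag : parity n = Matrix.diagonal (psign (n := n)) := by
  ext f g
  rw [parity_apply, Matrix.diagonal_apply]

lemma card_pairSet (j : Fin n) (hj : (j : ℕ) + 1 < n) : (pairSet j hj).card = 2 := by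
  rw [pairSet, Finset.card_pair]
  intro he
  have := congrArg Fin.val he
  simp at this

lemma psign_flip (j : Fin n) (hj : (j : ℕ) + 1 < n) (f : QIdx n) :
    psign (flipS (pairSet j hj) f) = psign f := by
  rw [psign_eq_zs_par, psign_eq_zs_par, par_flipS, card_pairSet]
  rw [show ((2 : ℕ) : ZMod 2) = 0 from by decide, add_zero]

lemma parity_comm (H : NMat n) (hH : H ∈ matchgateGens n) :
    H * parity n = parity n * H := by
  rcases hH with ⟨j, rfl⟩ | ⟨j, hj, rfl⟩
  · rw [pauliZ_diag, parity_diag, Matrix.diagonal_mul_diagonal, Matrix.diagonal_mul_diagonal]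
    exact congrArg Matrix.diagonal (funext fun f => mul_comm _ _)
  · ext f g
    have h1 : (pauliXX n j * parity n) f g
        = if g = flipS (pairSet j hj) f then psign (flipS (pairSet j hj) f) else 0 := by
      rw [Matrix.mul_apply]
      rw [Fintype.sum_eq_single (flipS (pairSet j hj) f) (fun b hb => by
        rw [pauliXX_apply j hj, if_neg hb, zero_mul])]
      rw [pauliXX_apply j hj, if_pos rfl, one_mul, parity_apply]
      by_cases h : g = flipS (pairSet j hj) f
      · rw [if_pos h, if_pos h.symm]
      · rw [if_neg h, if_neg (fun he => h he.symm)]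
    have h2 : (parity n * pauliXX n j) f g
        = if g = flipS (pairSet j hj) f then psign f else 0 := by
      rw [Matrix.mul_apply]
      rw [Fintype.sum_eq_single f (fun b hb => by
        rw [parity_apply, if_neg (fun he => hb he.symm), zero_mul])]
      rw [parity_apply, if_pos rfl, pauliXX_apply j hj]
      by_cases h : g = flipS (pairSet j hj) f
      · rw [if_pos h, if_pos h, mul_one]
      · rw [if_neg h, if_neg h, mul_zero]
    rw [h1, h2]
    by_cases h : g = flipS (pairSet j hj) f
    · rw [if_pos h, if_pos h, psign_flip]
    · rw [if_neg h, if_neg h]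

lemma linCommutant_eq (hn : 1 ≤ n) :
    linCommutant n = Submodule.span ℂ {(1 : NMat n), parity n} := by
  apply le_antisymm
  · intro L hL
    exact span_reach L hn hL
  · rw [Submodule.span_le]
    intro M hM
    rcases Set.mem_insert_iff.1 hM with rfl | hM
    · intro H _
      rw [mul_one, one_mul]
    · rw [Set.mem_singleton_iff.1 hM]
      intro H hH
      exact parity_comm H hH

lemma psign_fZero : psign (fZero n) = 1 := by
  rw [psign_eq_zs_par, par_fZero]; rfl

lemma psign_fOne (hn : 1 ≤ n) : psign (fOne n hn) = -1 := by
  rw [psign_eq_zs_par, par_fOne]; rfl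

lemma indep_pair (hn : 1 ≤ n) :
    LinearIndependent ℂ ![(1 : NMat n), parity n] := by
  rw [LinearIndependent.pair_iff]
  intro s t hst
  have e1 := congrFun (congrFun (congrArg (fun M : NMat n => (M : QIdx n → QIdx n → ℂ))
    hst) (fZero n)) (fZero n)
  have e2 := congrFun (congrFun (congrArg (fun M : NMat n => (M : QIdx n → QIdx n → ℂ))
    hst) (fOne n hn)) (fOne n hn)
  simp only [Matrix.add_apply, Matrix.smul_apply, Matrix.one_apply_eq, parity_apply,
    if_pos rfl, smul_eq_mul, Matrix.zero_apply, psign_fZero, psign_fOne, if_true, mul_one] at e1 e2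
  constructor
  · linear_combination (e1 + e2) / 2
  · linear_combination (e1 - e2) / 2

lemma range_pair : Set.range ![(1 : NMat n), parity n] = {(1 : NMat n), parity n} := by
  ext M
  simp only [Set.mem_range, Fin.exists_fin_two, Set.mem_insert_iff, Set.mem_singleton_iff]
  constructor
  · rintro (h | h) <;> [left; right] <;> exact h.symm
  · rintro (h | h) <;> [left; right] <;> exact h.symm

lemma finrank_commutant (hn : 1 ≤ n) :
    Module.finrank ℂ (linCommutant n) = 2 := by
  rw [linCommutant_eq hn, ← range_pair, finrank_span_eq_card (indep_pair hn)]
  simp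

end MGAux

/-- Any matrix commuting with all matchgate generators is a combination of the identity and
the parity operator `P = Z^{⊗n}`; the commutant has dimension `2`. -/
theorem linear_symmetries (n : ℕ) (hn : 1 ≤ n) :
    (∀ L : NMat n, (∀ H ∈ matchgateGens n, H * L = L * H) →
      L ∈ Submodule.span ℂ {(1 : NMat n), parity n})
    ∧ Module.finrank ℂ (linCommutant n) = 2 := by
  exact ⟨fun L hL => MGAux.span_reach L hn hL, MGAux.finrank_commutant hn⟩

end
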